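/- Continuity of information cost in the error parameter via input exchange: if there is a protocol computing f with error δ, internal information cost I, and the inputs have bit-length ℓ, then for every ε ∈ (0,1) there is a protocol with error at most (1−ε)δ and internal information cost at most (1−ε)·I + ε·ℓ′ for some ℓ′ ≤ 2ℓ (the cost of the trivial exchange protocol). -/

import Mathlib

open scoped Classical
open Finset

/-- Shannon entropy (base 2) of a pmf on a finite type. -/
noncomputable def entH {α : Type*} [Fintype α] (p : α → ℝ) : ℝ :=
  -∑ x, p x * Real.logb 2 (p x)

/-- Kullback-Leibler divergence (base 2) between pmfs on a finite type. -/
noncomputable def klD {α : Type*} [Fintype α] (p q : α → ℝ) : ℝ :=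
  ∑ x, p x * Real.logb 2 (p x / q x)

/-- Distribution of a random variable `f` on a finite sample space with pmf `μ`. -/
noncomputable def distOf {Ω α : Type*} [Fintype Ω] [Fintype α] (μ : Ω → ℝ) (f : Ω → α) : α → ℝ :=
  fun x => ∑ ω, if f ω = x then μ ω else 0

/-- Entropy of a random variable. -/
noncomputable def rvH {Ω α : Type*} [Fintype Ω] [Fintype α] (μ : Ω → ℝ) (f : Ω → α) : ℝ :=
  entH (distOf μ f)

/-- Conditional entropy H(f | g). -/
noncomputable def condEnt {Ω α β : Type*} [Fintype Ω] [Fintype α] [Fintype β]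
    (μ : Ω → ℝ) (f : Ω → α) (g : Ω → β) : ℝ :=
  rvH μ (fun ω => (f ω, g ω)) - rvH μ g

/-- Conditional mutual information I(A ; B | C). -/
noncomputable def cMI {Ω α β γ : Type*} [Fintype Ω] [Fintype α] [Fintype β] [Fintype γ]
    (μ : Ω → ℝ) (A : Ω → α) (B : Ω → β) (C : Ω → γ) : ℝ :=
  condEnt μ A C - condEnt μ A (fun ω => (B ω, C ω))



section Helpers
variable {Ω Ω₂ α β γ : Type*} [Fintype Ω] [Fintype Ω₂] [Fintype α] [Fintype β] [Fintype γ]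

lemma distOf_nonneg (μ : Ω → ℝ) (hμ : ∀ ω, 0 ≤ μ ω) (f : Ω → α) (x : α) :
    0 ≤ distOf μ f x :=
  Finset.sum_nonneg fun ω _ => by split <;> simp [hμ ω]

lemma distOf_sum (μ : Ω → ℝ) (f : Ω → α) : ∑ x, distOf μ f x = ∑ ω, μ ω := by
  unfold distOf
  rw [Finset.sum_comm]
  simp

lemma distOf_reindex (e : Ω₂ ≃ Ω) (μ : Ω → ℝ) (G : Ω → α) :
    distOf (fun i => μ (e i)) (fun i => G (e i)) = distOf μ G := by
  funext x
  unfold distOf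
  exact Fintype.sum_equiv e _ _ fun i => rfl

lemma entH_relabel (j : α ≃ β) (p : α → ℝ) : entH (fun b => p (j.symm b)) = entH p := by
  unfold entH
  congr 1
  exact Fintype.sum_equiv j.symm _ _ fun b => rfl

lemma distOf_relabel (j : α ≃ β) (μ : Ω → ℝ) (G : Ω → α) :
    distOf μ (fun ω => j (G ω)) = fun b => distOf μ G (j.symm b) := by
  funext b
  unfold distOf
  refine Finset.sum_congr rfl fun ω _ => ?_
  rw [← Equiv.eq_symm_apply]

lemma rvH_reindex (e : Ω₂ ≃ Ω) (μ : Ω → ℝ) (G : Ω → α) :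
    rvH (fun i => μ (e i)) (fun i => G (e i)) = rvH μ G := by
  unfold rvH; rw [distOf_reindex]

lemma rvH_relabel (j : α ≃ β) (μ : Ω → ℝ) (G : Ω → α) :
    rvH μ (fun ω => j (G ω)) = rvH μ G := by
  unfold rvH; rw [distOf_relabel]; exact entH_relabel j _

lemma mul_logb_mul (x y : ℝ) (hx : 0 ≤ x) (hy : 0 ≤ y) :
    x * y * Real.logb 2 (x * y) = x * y * Real.logb 2 x + x * y * Real.logb 2 y := by
  rcases (hx.eq_or_lt.imp Eq.symm id) with h | h
  · simp [h]
  rcases (hy.eq_or_lt.imp Eq.symm id) with h' | h'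
  · simp [h']
  rw [Real.logb_mul h.ne' h'.ne', mul_add]

lemma entH_paste (p : α → ℝ) (q : β → ℝ) (r : γ → ℝ) (w₀ w₁ : ℝ)
    (hp : ∀ a, 0 ≤ p a) (hq : ∀ b, 0 ≤ q b) (hw₀ : 0 ≤ w₀) (hw₁ : 0 ≤ w₁)
    (e₀ : α → γ) (e₁ : β → γ) (he₀ : Function.Injective e₀) (he₁ : Function.Injective e₁)
    (hdisj : ∀ a b, e₀ a ≠ e₁ b)
    (hr₀ : ∀ a, r (e₀ a) = w₀ * p a) (hr₁ : ∀ b, r (e₁ b) = w₁ * q b)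
    (hr2 : ∀ c, (∀ a, c ≠ e₀ a) → (∀ b, c ≠ e₁ b) → r c = 0) :
    entH r = w₀ * entH p + w₁ * entH q
      - (∑ a, p a) * (w₀ * Real.logb 2 w₀) - (∑ b, q b) * (w₁ * Real.logb 2 w₁) := by
  have hdisj' : Disjoint (univ.image e₀) (univ.image e₁) := by
    rw [Finset.disjoint_left]
    rintro c hc hc'
    obtain ⟨a, -, rfl⟩ := Finset.mem_image.1 hc
    obtain ⟨b, -, hb⟩ := Finset.mem_image.1 hc'
    exact hdisj a b hb.symm
  have key : ∑ c, r c * Real.logb 2 (r c)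
      = ∑ a, r (e₀ a) * Real.logb 2 (r (e₀ a)) + ∑ b, r (e₁ b) * Real.logb 2 (r (e₁ b)) := by
    have i0 : ∑ c ∈ univ.image e₀, (r c * Real.logb 2 (r c))
        = ∑ a, r (e₀ a) * Real.logb 2 (r (e₀ a)) :=
      Finset.sum_image (fun a _ a' _ h => he₀ h)
    have i1 : ∑ c ∈ univ.image e₁, (r c * Real.logb 2 (r c))
        = ∑ b, r (e₁ b) * Real.logb 2 (r (e₁ b)) :=
      Finset.sum_image (fun b _ b' _ h => he₁ h)
    rw [← i0, ← i1, ← Finset.sum_union hdisj']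
    refine (Finset.sum_subset (Finset.subset_univ _) fun c _ hc => ?_).symm
    rw [Finset.mem_union, not_or] at hc
    rw [hr2 c (fun a ha => hc.1 (Finset.mem_image.2 ⟨a, Finset.mem_univ a, ha.symm⟩))
        (fun b hb => hc.2 (Finset.mem_image.2 ⟨b, Finset.mem_univ b, hb.symm⟩))]
    simp
  have e1 : ∀ a, r (e₀ a) * Real.logb 2 (r (e₀ a))
      = (w₀ * Real.logb 2 w₀) * p a + w₀ * (p a * Real.logb 2 (p a)) := by
    intro a
    rw [hr₀ a, mul_logb_mul w₀ (p a) hw₀ (hp a)]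
    ring
  have e2 : ∀ b, r (e₁ b) * Real.logb 2 (r (e₁ b))
      = (w₁ * Real.logb 2 w₁) * q b + w₁ * (q b * Real.logb 2 (q b)) := by
    intro b
    rw [hr₁ b, mul_logb_mul w₁ (q b) hw₁ (hq b)]
    ring
  unfold entH
  rw [key, Finset.sum_congr rfl (fun a _ => e1 a), Finset.sum_congr rfl (fun b _ => e2 b),
      Finset.sum_add_distrib, Finset.sum_add_distrib, ← Finset.mul_sum, ← Finset.mul_sum,
      ← Finset.mul_sum, ← Finset.mul_sum]
  ring

lemma distOf_mix_apply (μ : Ω → ℝ) (w : Bool → ℝ) (F : Ω × Bool → γ) (c : γ) :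
    distOf (fun z : Ω × Bool => μ z.1 * w z.2) F c
      = w false * (∑ ω, if F (ω, false) = c then μ ω else 0)
        + w true * (∑ ω, if F (ω, true) = c then μ ω else 0) := by
  unfold distOf
  rw [Fintype.sum_prod_type]
  simp only [Fintype.sum_bool]
  rw [Finset.sum_add_distrib, Finset.mul_sum, Finset.mul_sum, add_comm]
  congr 1 <;> exact Finset.sum_congr rfl fun ω _ => by split <;> ring

lemma rvH_mix (μ : Ω → ℝ) (hμ : ∀ ω, 0 ≤ μ ω) (w : Bool → ℝ) (hw : ∀ b, 0 ≤ w b)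
    (F : Ω × Bool → γ) (g : Ω → α) (h : Ω → β) (e₀ : α → γ) (e₁ : β → γ)
    (he₀ : Function.Injective e₀) (he₁ : Function.Injective e₁)
    (hdisj : ∀ a b, e₀ a ≠ e₁ b)
    (hF0 : ∀ ω, F (ω, false) = e₀ (g ω)) (hF1 : ∀ ω, F (ω, true) = e₁ (h ω)) :
    rvH (fun z : Ω × Bool => μ z.1 * w z.2) F
      = w false * rvH μ g + w true * rvH μ h
        - (∑ ω, μ ω) * (w false * Real.logb 2 (w false))
        - (∑ ω, μ ω) * (w true * Real.logb 2 (w true)) := by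
  have hr₀ : ∀ a, distOf (fun z : Ω × Bool => μ z.1 * w z.2) F (e₀ a)
      = w false * distOf μ g a := by
    intro a
    rw [distOf_mix_apply]
    have h1 : (∑ ω, if F (ω, true) = e₀ a then μ ω else 0) = 0 :=
      Finset.sum_eq_zero fun ω _ => by
        rw [hF1, if_neg (fun hh => hdisj a (h ω) hh.symm)]
    have h2 : (∑ ω, if F (ω, false) = e₀ a then μ ω else 0) = distOf μ g a := by
      unfold distOf
      exact Finset.sum_congr rfl fun ω _ => by rw [hF0, he₀.eq_iff]
    rw [h1, h2, mul_zero, add_zero]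
  have hr₁ : ∀ b, distOf (fun z : Ω × Bool => μ z.1 * w z.2) F (e₁ b)
      = w true * distOf μ h b := by
    intro b
    rw [distOf_mix_apply]
    have h1 : (∑ ω, if F (ω, false) = e₁ b then μ ω else 0) = 0 :=
      Finset.sum_eq_zero fun ω _ => by
        rw [hF0, if_neg (fun hh => hdisj (g ω) b hh)]
    have h2 : (∑ ω, if F (ω, true) = e₁ b then μ ω else 0) = distOf μ h b := by
      unfold distOf
      exact Finset.sum_congr rfl fun ω _ => by rw [hF1, he₁.eq_iff]
    rw [h1, h2, mul_zero, zero_add]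
  have hr2 : ∀ c, (∀ a, c ≠ e₀ a) → (∀ b, c ≠ e₁ b) →
      distOf (fun z : Ω × Bool => μ z.1 * w z.2) F c = 0 := by
    intro c hc0 hc1
    rw [distOf_mix_apply]
    have h1 : (∑ ω, if F (ω, false) = c then μ ω else 0) = 0 :=
      Finset.sum_eq_zero fun ω _ => by
        rw [hF0, if_neg (fun hh => hc0 (g ω) hh.symm)]
    have h2 : (∑ ω, if F (ω, true) = c then μ ω else 0) = 0 :=
      Finset.sum_eq_zero fun ω _ => by
        rw [hF1, if_neg (fun hh => hc1 (h ω) hh.symm)]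
    rw [h1, h2, mul_zero, mul_zero, add_zero]
  have := entH_paste (distOf μ g) (distOf μ h)
    (distOf (fun z : Ω × Bool => μ z.1 * w z.2) F) (w false) (w true)
    (distOf_nonneg μ hμ g) (distOf_nonneg μ hμ h) (hw false) (hw true)
    e₀ e₁ he₀ he₁ hdisj hr₀ hr₁ hr2
  unfold rvH
  rw [this, distOf_sum, distOf_sum]

lemma distOf_marg (μ : Ω → ℝ) (f : Ω → α) (g : Ω → β) (y : β) :
    distOf μ g y = ∑ x, distOf μ (fun ω => (f ω, g ω)) (x, y) := by
  unfold distOf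
  rw [Finset.sum_comm]
  refine Finset.sum_congr rfl fun ω _ => ?_
  simp [Prod.mk.injEq, ite_and, Finset.sum_ite_eq]

lemma condEnt_le_logb_card [Nonempty α] (μ : Ω → ℝ) (hμ : ∀ ω, 0 ≤ μ ω)
    (hs : ∑ ω, μ ω = 1) (X : Ω → α) (Y : Ω → β) :
    condEnt μ X Y ≤ Real.logb 2 (Fintype.card α) := by
  set p : α × β → ℝ := distOf μ (fun ω => (X ω, Y ω)) with hp
  set pY : β → ℝ := distOf μ Y with hpY
  have hpn : ∀ z, 0 ≤ p z := distOf_nonneg μ hμ _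
  have hpYn : ∀ y, 0 ≤ pY y := distOf_nonneg μ hμ _
  have hpsum : ∑ z, p z = 1 := by rw [hp, distOf_sum, hs]
  have hmarg : ∀ y, pY y = ∑ x, p (x, y) := fun y => distOf_marg μ X Y y
  set N : ℝ := (Fintype.card α : ℝ) with hN
  have hN1 : 1 ≤ N := by
    rw [hN]; exact_mod_cast Fintype.card_pos
  have hN0 : 0 < N := lt_of_lt_of_le one_pos hN1
  have hlog2 : 0 < Real.log 2 := Real.log_pos one_lt_two
  have hb : ∀ z : α × β,
      p z * (Real.logb 2 (pY z.2) - Real.logb 2 (p z) - Real.logb 2 N)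
        ≤ (pY z.2 / N - p z) / Real.log 2 := by
    intro z
    rcases ((hpn z).eq_or_lt.imp Eq.symm id) with h0 | h0
    · rw [h0]
      simp only [zero_mul, sub_zero]
      have := hpYn z.2
      positivity
    · have hple : p z ≤ pY z.2 := by
        rw [hmarg z.2]
        exact Finset.single_le_sum (f := fun x => p (x, z.2))
          (fun x _ => hpn (x, z.2)) (Finset.mem_univ z.1)
      have hpY0 : 0 < pY z.2 := lt_of_lt_of_le h0 hple
      set t : ℝ := pY z.2 / (N * p z) with ht
      have ht0 : 0 < t := by positivity
      have hlb : Real.logb 2 (pY z.2) - Real.logb 2 (p z) - Real.logb 2 N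
          = Real.log t / Real.log 2 := by
        rw [ht, Real.log_div hpY0.ne' (by positivity), Real.log_mul hN0.ne' h0.ne']
        simp only [Real.logb]
        ring
      rw [hlb]
      have hlog_le : Real.log t ≤ t - 1 := Real.log_le_sub_one_of_pos ht0
      have : p z * (Real.log t / Real.log 2) ≤ p z * ((t - 1) / Real.log 2) := by
        apply mul_le_mul_of_nonneg_left _ h0.le
        exact div_le_div_of_nonneg_right hlog_le hlog2.le
      refine this.trans_eq ?_
      rw [ht]
      field_simp
  have hsum0 : ∑ z : α × β, (pY z.2 / N - p z) = 0 := by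
    rw [Finset.sum_sub_distrib, hpsum]
    have ha : ∑ z : α × β, pY z.2 / N = ∑ y, pY y := by
      rw [Fintype.sum_prod_type_right]
      refine Finset.sum_congr rfl fun y _ => ?_
      dsimp only
      rw [Finset.sum_const, Finset.card_univ, nsmul_eq_mul, hN]
      field_simp
    have hb' : ∑ y, pY y = 1 := by rw [hpY, distOf_sum, hs]
    rw [ha, hb']; ring
  have hsumr : ∑ z : α × β, (pY z.2 / N - p z) / Real.log 2 = 0 := by
    rw [← Finset.sum_div, hsum0, zero_div]
  have hexp : condEnt μ X Y - Real.logb 2 N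
      = ∑ z : α × β, p z * (Real.logb 2 (pY z.2) - Real.logb 2 (p z) - Real.logb 2 N) := by
    have h1 : ∑ z : α × β, p z * Real.logb 2 (pY z.2) = ∑ y, pY y * Real.logb 2 (pY y) := by
      rw [Fintype.sum_prod_type_right]
      refine Finset.sum_congr rfl fun y _ => ?_
      dsimp only
      rw [hmarg y, Finset.sum_mul]
    have h2 : ∑ z : α × β, p z * Real.logb 2 N = Real.logb 2 N := by
      rw [← Finset.sum_mul, hpsum, one_mul]
    calc condEnt μ X Y - Real.logb 2 N
        = (-∑ z : α × β, p z * Real.logb 2 (p z)) - (-∑ y, pY y * Real.logb 2 (pY y))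
            - Real.logb 2 N := by
          unfold condEnt rvH entH
          rw [← hp, ← hpY]
      _ = ∑ z : α × β, (p z * Real.logb 2 (pY z.2) - p z * Real.logb 2 (p z)
            - p z * Real.logb 2 N) := by
          rw [Finset.sum_sub_distrib, Finset.sum_sub_distrib, h1, h2]
          ring
      _ = _ := Finset.sum_congr rfl fun z _ => by ring
  have := Finset.sum_le_sum (fun z (_ : z ∈ univ) => hb z)
  rw [← hexp, hsumr] at this
  linarith

lemma distOf_fst (μ : Ω → ℝ) (w : Bool → ℝ) (hw : w false + w true = 1)
    (G : Ω → α) (F : Ω × Bool → α) (hF : ∀ z, F z = G z.1) :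
    distOf (fun z : Ω × Bool => μ z.1 * w z.2) F = distOf μ G := by
  funext x
  unfold distOf
  rw [Fintype.sum_prod_type]
  simp only [Fintype.sum_bool, hF]
  refine Finset.sum_congr rfl fun ω _ => ?_
  by_cases h : G ω = x
  · simp only [h, if_true]
    rw [show μ ω * w true + μ ω * w false = μ ω * (w false + w true) by ring, hw, mul_one]
  · simp [h]

lemma rvH_fst (μ : Ω → ℝ) (w : Bool → ℝ) (hw : w false + w true = 1)
    (G : Ω → α) (F : Ω × Bool → α) (hF : ∀ z, F z = G z.1) :
    rvH (fun z : Ω × Bool => μ z.1 * w z.2) F = rvH μ G := by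
  unfold rvH; rw [distOf_fst μ w hw G F hF]

end Helpers

theorem construction {Ω 𝒯 : Type} [Fintype Ω] [Fintype 𝒯]
    {ℓ : ℕ} (f : (Fin ℓ → Bool) → (Fin ℓ → Bool) → Bool)
    (μ : Ω → ℝ) (hμ : ∀ ω, 0 ≤ μ ω) (hs : ∑ ω, μ ω = 1)
    (X Y : Ω → (Fin ℓ → Bool)) (T : Ω → 𝒯) (out : 𝒯 → Bool)
    (δ I : ℝ)
    (herr : (∑ ω, if out (T ω) ≠ f (X ω) (Y ω) then μ ω else 0) ≤ δ)
    (hI : cMI μ X T Y + cMI μ Y T X = I)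
    (ε : ℝ) (hε : 0 < ε) (hε1 : ε < 1) :
    ∃ (Ω' : Type) (_ : Fintype Ω') (𝒯' : Type) (_ : Fintype 𝒯')
      (μ' : Ω' → ℝ) (X' Y' : Ω' → (Fin ℓ → Bool)) (T' : Ω' → 𝒯') (out' : 𝒯' → Bool),
      (∀ ω, 0 ≤ μ' ω) ∧ (∑ ω, μ' ω = 1) ∧
      distOf μ' (fun ω => (X' ω, Y' ω)) = distOf μ (fun ω => (X ω, Y ω)) ∧
      (∑ ω, if out' (T' ω) ≠ f (X' ω) (Y' ω) then μ' ω else 0) ≤ (1 - ε) * δ ∧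
      ∃ ℓ' : ℝ, ℓ' ≤ 2 * ℓ ∧
        cMI μ' X' T' Y' + cMI μ' Y' T' X' ≤ (1 - ε) * I + ε * ℓ' := by
  set w : Bool → ℝ := fun b => if b then ε else 1 - ε with hwdef
  have hw : ∀ b, 0 ≤ w b := by
    intro b; cases b <;> simp [hwdef] <;> linarith
  have hw1 : w false + w true = 1 := by simp [hwdef]
  refine ⟨Ω × Bool, inferInstance, 𝒯 ⊕ ((Fin ℓ → Bool) × (Fin ℓ → Bool)), inferInstance,
    (fun z => μ z.1 * w z.2), (fun z => X z.1), (fun z => Y z.1),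
    (fun z => if z.2 then Sum.inr (X z.1, Y z.1) else Sum.inl (T z.1)),
    (Sum.elim out (fun p => f p.1 p.2)), ?_, ?_, ?_, ?_, ?_⟩
  · intro z
    exact mul_nonneg (hμ z.1) (hw z.2)
  · rw [Fintype.sum_prod_type]
    simp only [Fintype.sum_bool]
    calc ∑ i, (μ i * w true + μ i * w false) = ∑ i, μ i :=
          Finset.sum_congr rfl fun i _ => by
            rw [show μ i * w true + μ i * w false = μ i * (w false + w true) by ring,
              hw1, mul_one]
      _ = 1 := hs
  · exact distOf_fst μ w hw1 _ _ fun z => rfl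
  · show (∑ z : Ω × Bool, if Sum.elim out (fun p : (Fin ℓ → Bool) × (Fin ℓ → Bool) => f p.1 p.2)
        (if z.2 then Sum.inr (X z.1, Y z.1) else Sum.inl (T z.1)) ≠ f (X z.1) (Y z.1)
        then μ z.1 * w z.2 else 0) ≤ (1 - ε) * δ
    have hpt : ∀ z : Ω × Bool,
        (if Sum.elim out (fun p : (Fin ℓ → Bool) × (Fin ℓ → Bool) => f p.1 p.2)
          (if z.2 then Sum.inr (X z.1, Y z.1) else Sum.inl (T z.1)) ≠ f (X z.1) (Y z.1)
          then μ z.1 * w z.2 else 0)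
        = (if z.2 then 0
            else (1 - ε) * (if out (T z.1) ≠ f (X z.1) (Y z.1) then μ z.1 else 0)) := by
      rintro ⟨i, b⟩
      cases b
      · simp only [Bool.false_eq_true, if_false, Sum.elim_inl]
        by_cases h : out (T i) ≠ f (X i) (Y i) <;> simp [h, hwdef] <;> ring
      · simp [hwdef]
    rw [Finset.sum_congr rfl fun z _ => hpt z, Fintype.sum_prod_type]
    simp only [Fintype.sum_bool, if_true, Bool.false_eq_true, if_false, zero_add]
    rw [← Finset.mul_sum]
    exact mul_le_mul_of_nonneg_left herr (by linarith)
  · -- information cost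
    have M1 : rvH (fun z : Ω × Bool => μ z.1 * w z.2) (fun z => (X z.1, Y z.1))
        = rvH μ (fun ω => (X ω, Y ω)) := rvH_fst μ w hw1 _ _ fun z => rfl
    have M2 : rvH (fun z : Ω × Bool => μ z.1 * w z.2) (fun z => Y z.1) = rvH μ Y :=
      rvH_fst μ w hw1 _ _ fun z => rfl
    have M3 : rvH (fun z : Ω × Bool => μ z.1 * w z.2) (fun z => (Y z.1, X z.1))
        = rvH μ (fun ω => (Y ω, X ω)) := rvH_fst μ w hw1 _ _ fun z => rfl
    have M4 : rvH (fun z : Ω × Bool => μ z.1 * w z.2) (fun z => X z.1) = rvH μ X :=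
      rvH_fst μ w hw1 _ _ fun z => rfl
    have H1 : rvH (fun z : Ω × Bool => μ z.1 * w z.2)
        (fun z => (X z.1, (if z.2 then Sum.inr (X z.1, Y z.1) else Sum.inl (T z.1), Y z.1)))
        = w false * rvH μ (fun ω => (X ω, (T ω, Y ω))) + w true * rvH μ (fun ω => (X ω, Y ω))
          - (∑ ω, μ ω) * (w false * Real.logb 2 (w false))
          - (∑ ω, μ ω) * (w true * Real.logb 2 (w true)) := by
      refine rvH_mix μ hμ w hw _ (fun ω => (X ω, (T ω, Y ω))) (fun ω => (X ω, Y ω))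
        (fun v : (Fin ℓ → Bool) × (𝒯 × (Fin ℓ → Bool)) => (v.1, (Sum.inl v.2.1, v.2.2)))
        (fun v : (Fin ℓ → Bool) × (Fin ℓ → Bool) => (v.1, (Sum.inr v, v.2)))
        ?_ ?_ ?_ (fun ω => rfl) (fun ω => rfl)
      · rintro ⟨a1, a2, a3⟩ ⟨b1, b2, b3⟩ h
        simp_all [Prod.ext_iff]
      · rintro ⟨a1, a2⟩ ⟨b1, b2⟩ h
        simp_all [Prod.ext_iff]
      · rintro ⟨a1, a2, a3⟩ ⟨b1, b2⟩ h
        simp [Prod.ext_iff] at h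
    have H2 : rvH (fun z : Ω × Bool => μ z.1 * w z.2)
        (fun z => (if z.2 then Sum.inr (X z.1, Y z.1) else Sum.inl (T z.1), Y z.1))
        = w false * rvH μ (fun ω => (T ω, Y ω)) + w true * rvH μ (fun ω => (X ω, Y ω))
          - (∑ ω, μ ω) * (w false * Real.logb 2 (w false))
          - (∑ ω, μ ω) * (w true * Real.logb 2 (w true)) := by
      refine rvH_mix μ hμ w hw _ (fun ω => (T ω, Y ω)) (fun ω => (X ω, Y ω))
        (fun v : 𝒯 × (Fin ℓ → Bool) => (Sum.inl v.1, v.2))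
        (fun v : (Fin ℓ → Bool) × (Fin ℓ → Bool) => (Sum.inr v, v.2))
        ?_ ?_ ?_ (fun ω => rfl) (fun ω => rfl)
      · rintro ⟨a1, a2⟩ ⟨b1, b2⟩ h
        simp_all [Prod.ext_iff]
      · rintro ⟨a1, a2⟩ ⟨b1, b2⟩ h
        simp_all [Prod.ext_iff]
      · rintro ⟨a1, a2⟩ ⟨b1, b2⟩ h
        simp [Prod.ext_iff] at h
    have H3 : rvH (fun z : Ω × Bool => μ z.1 * w z.2)
        (fun z => (Y z.1, (if z.2 then Sum.inr (X z.1, Y z.1) else Sum.inl (T z.1), X z.1)))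
        = w false * rvH μ (fun ω => (Y ω, (T ω, X ω))) + w true * rvH μ (fun ω => (X ω, Y ω))
          - (∑ ω, μ ω) * (w false * Real.logb 2 (w false))
          - (∑ ω, μ ω) * (w true * Real.logb 2 (w true)) := by
      refine rvH_mix μ hμ w hw _ (fun ω => (Y ω, (T ω, X ω))) (fun ω => (X ω, Y ω))
        (fun v : (Fin ℓ → Bool) × (𝒯 × (Fin ℓ → Bool)) => (v.1, (Sum.inl v.2.1, v.2.2)))
        (fun v : (Fin ℓ → Bool) × (Fin ℓ → Bool) => (v.2, (Sum.inr v, v.1)))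
        ?_ ?_ ?_ (fun ω => rfl) (fun ω => rfl)
      · rintro ⟨a1, a2, a3⟩ ⟨b1, b2, b3⟩ h
        simp_all [Prod.ext_iff]
      · rintro ⟨a1, a2⟩ ⟨b1, b2⟩ h
        simp_all [Prod.ext_iff]
      · rintro ⟨a1, a2, a3⟩ ⟨b1, b2⟩ h
        simp [Prod.ext_iff] at h
    have H4 : rvH (fun z : Ω × Bool => μ z.1 * w z.2)
        (fun z => (if z.2 then Sum.inr (X z.1, Y z.1) else Sum.inl (T z.1), X z.1))
        = w false * rvH μ (fun ω => (T ω, X ω)) + w true * rvH μ (fun ω => (X ω, Y ω))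
          - (∑ ω, μ ω) * (w false * Real.logb 2 (w false))
          - (∑ ω, μ ω) * (w true * Real.logb 2 (w true)) := by
      refine rvH_mix μ hμ w hw _ (fun ω => (T ω, X ω)) (fun ω => (X ω, Y ω))
        (fun v : 𝒯 × (Fin ℓ → Bool) => (Sum.inl v.1, v.2))
        (fun v : (Fin ℓ → Bool) × (Fin ℓ → Bool) => (Sum.inr v, v.1))
        ?_ ?_ ?_ (fun ω => rfl) (fun ω => rfl)
      · rintro ⟨a1, a2⟩ ⟨b1, b2⟩ h
        simp_all [Prod.ext_iff]
      · rintro ⟨a1, a2⟩ ⟨b1, b2⟩ h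
        simp_all [Prod.ext_iff]
      · rintro ⟨a1, a2⟩ ⟨b1, b2⟩ h
        simp [Prod.ext_iff] at h
    refine ⟨condEnt μ X Y + condEnt μ Y X, ?_, ?_⟩
    · have l1 : condEnt μ X Y ≤ Real.logb 2 (Fintype.card (Fin ℓ → Bool)) :=
        condEnt_le_logb_card μ hμ hs X Y
      have l2 : condEnt μ Y X ≤ Real.logb 2 (Fintype.card (Fin ℓ → Bool)) :=
        condEnt_le_logb_card μ hμ hs Y X
      have hcard : ((Fintype.card (Fin ℓ → Bool) : ℕ) : ℝ) = 2 ^ ℓ := by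
        rw [Fintype.card_fun]
        push_cast
        norm_num
      have hlogb : Real.logb 2 ((Fintype.card (Fin ℓ → Bool) : ℕ) : ℝ) = (ℓ : ℝ) := by
        rw [hcard, Real.logb_pow, Real.logb_self_eq_one (by norm_num), mul_one]
      linarith
    · refine le_of_eq ?_
      simp only [cMI, condEnt]
      rw [M1, M2, M3, M4, H1, H2, H3, H4,
        show w true = ε from rfl, show w false = 1 - ε from rfl, ← hI]
      simp only [cMI, condEnt]
      ring

/-- Continuity of information cost in the error parameter: from a protocol with error δ
and internal information cost I on inputs of bit-length ℓ, one gets for every ε a protocol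
with error at most (1−ε)δ and information cost at most (1−ε)I + ε·ℓ' with ℓ' ≤ 2ℓ. -/
theorem info_cost_continuity {Ω 𝒯 : Type*} [Fintype Ω] [Fintype 𝒯]
    {ℓ : ℕ} (f : (Fin ℓ → Bool) → (Fin ℓ → Bool) → Bool)
    (μ : Ω → ℝ) (hμ : ∀ ω, 0 ≤ μ ω) (hs : ∑ ω, μ ω = 1)
    (X Y : Ω → (Fin ℓ → Bool)) (T : Ω → 𝒯) (out : 𝒯 → Bool)
    (δ I : ℝ)
    (herr : (∑ ω, if out (T ω) ≠ f (X ω) (Y ω) then μ ω else 0) ≤ δ)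
    (hI : cMI μ X T Y + cMI μ Y T X = I)
    (ε : ℝ) (hε : 0 < ε) (hε1 : ε < 1) :
    ∃ (Ω' : Type) (_ : Fintype Ω') (𝒯' : Type) (_ : Fintype 𝒯')
      (μ' : Ω' → ℝ) (X' Y' : Ω' → (Fin ℓ → Bool)) (T' : Ω' → 𝒯') (out' : 𝒯' → Bool),
      (∀ ω, 0 ≤ μ' ω) ∧ (∑ ω, μ' ω = 1) ∧
      distOf μ' (fun ω => (X' ω, Y' ω)) = distOf μ (fun ω => (X ω, Y ω)) ∧
      (∑ ω, if out' (T' ω) ≠ f (X' ω) (Y' ω) then μ' ω else 0) ≤ (1 - ε) * δ ∧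
      ∃ ℓ' : ℝ, ℓ' ≤ 2 * ℓ ∧
        cMI μ' X' T' Y' + cMI μ' Y' T' X' ≤ (1 - ε) * I + ε * ℓ' := by
  classical
  -- transfer everything to universe-0 copies of Ω and 𝒯
  have hμ0 : ∀ i, 0 ≤ (fun i => μ ((Fintype.equivFin Ω).symm i)) i := fun i => hμ _
  have hs0 : ∑ i, (fun i => μ ((Fintype.equivFin Ω).symm i)) i = 1 := by
    rw [Equiv.sum_comp (Fintype.equivFin Ω).symm μ]; exact hs
  have herr0 : (∑ i, if out ((Fintype.equivFin 𝒯).symm ((Fintype.equivFin 𝒯) (T ((Fintype.equivFin Ω).symm i))))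
        ≠ f (X ((Fintype.equivFin Ω).symm i)) (Y ((Fintype.equivFin Ω).symm i))
      then μ ((Fintype.equivFin Ω).symm i) else 0) ≤ δ := by
    have key := Fintype.sum_equiv (Fintype.equivFin Ω)
      (fun ω => if out (T ω) ≠ f (X ω) (Y ω) then μ ω else 0)
      (fun i => if out ((Fintype.equivFin 𝒯).symm ((Fintype.equivFin 𝒯) (T ((Fintype.equivFin Ω).symm i))))
          ≠ f (X ((Fintype.equivFin Ω).symm i)) (Y ((Fintype.equivFin Ω).symm i))
        then μ ((Fintype.equivFin Ω).symm i) else 0)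
      (fun ω => by simp)
    rw [← key]
    exact herr
  have hI0 : cMI (fun i => μ ((Fintype.equivFin Ω).symm i))
        (fun i => X ((Fintype.equivFin Ω).symm i))
        (fun i => (Fintype.equivFin 𝒯) (T ((Fintype.equivFin Ω).symm i)))
        (fun i => Y ((Fintype.equivFin Ω).symm i))
      + cMI (fun i => μ ((Fintype.equivFin Ω).symm i))
        (fun i => Y ((Fintype.equivFin Ω).symm i))
        (fun i => (Fintype.equivFin 𝒯) (T ((Fintype.equivFin Ω).symm i)))
        (fun i => X ((Fintype.equivFin Ω).symm i)) = I := by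
    have a1 : rvH (fun i => μ ((Fintype.equivFin Ω).symm i))
        (fun i => (X ((Fintype.equivFin Ω).symm i), Y ((Fintype.equivFin Ω).symm i)))
        = rvH μ (fun ω => (X ω, Y ω)) :=
      rvH_reindex (Fintype.equivFin Ω).symm μ (fun ω => (X ω, Y ω))
    have a2 : rvH (fun i => μ ((Fintype.equivFin Ω).symm i))
        (fun i => Y ((Fintype.equivFin Ω).symm i)) = rvH μ Y :=
      rvH_reindex (Fintype.equivFin Ω).symm μ Y
    have a3 : rvH (fun i => μ ((Fintype.equivFin Ω).symm i))
        (fun i => (X ((Fintype.equivFin Ω).symm i),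
          ((Fintype.equivFin 𝒯) (T ((Fintype.equivFin Ω).symm i)), Y ((Fintype.equivFin Ω).symm i))))
        = rvH μ (fun ω => (X ω, (T ω, Y ω))) := by
      have r1 : rvH (fun i => μ ((Fintype.equivFin Ω).symm i))
          (fun i => ((Equiv.refl (Fin ℓ → Bool)).prodCongr
            ((Fintype.equivFin 𝒯).prodCongr (Equiv.refl (Fin ℓ → Bool)))
            ((fun i => (X ((Fintype.equivFin Ω).symm i),
              (T ((Fintype.equivFin Ω).symm i), Y ((Fintype.equivFin Ω).symm i)))) i)))
          = rvH (fun i => μ ((Fintype.equivFin Ω).symm i))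
            (fun i => (X ((Fintype.equivFin Ω).symm i),
              (T ((Fintype.equivFin Ω).symm i), Y ((Fintype.equivFin Ω).symm i)))) :=
        rvH_relabel _ _ _
      exact r1.trans (rvH_reindex (Fintype.equivFin Ω).symm μ (fun ω => (X ω, (T ω, Y ω))))
    have a4 : rvH (fun i => μ ((Fintype.equivFin Ω).symm i))
        (fun i => ((Fintype.equivFin 𝒯) (T ((Fintype.equivFin Ω).symm i)), Y ((Fintype.equivFin Ω).symm i)))
        = rvH μ (fun ω => (T ω, Y ω)) := by
      have r1 : rvH (fun i => μ ((Fintype.equivFin Ω).symm i))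
          (fun i => ((Fintype.equivFin 𝒯).prodCongr (Equiv.refl (Fin ℓ → Bool))
            ((fun i => (T ((Fintype.equivFin Ω).symm i), Y ((Fintype.equivFin Ω).symm i))) i)))
          = rvH (fun i => μ ((Fintype.equivFin Ω).symm i))
            (fun i => (T ((Fintype.equivFin Ω).symm i), Y ((Fintype.equivFin Ω).symm i))) :=
        rvH_relabel _ _ _
      exact r1.trans (rvH_reindex (Fintype.equivFin Ω).symm μ (fun ω => (T ω, Y ω)))
    have a5 : rvH (fun i => μ ((Fintype.equivFin Ω).symm i))
        (fun i => (Y ((Fintype.equivFin Ω).symm i), X ((Fintype.equivFin Ω).symm i)))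
        = rvH μ (fun ω => (Y ω, X ω)) :=
      rvH_reindex (Fintype.equivFin Ω).symm μ (fun ω => (Y ω, X ω))
    have a6 : rvH (fun i => μ ((Fintype.equivFin Ω).symm i))
        (fun i => X ((Fintype.equivFin Ω).symm i)) = rvH μ X :=
      rvH_reindex (Fintype.equivFin Ω).symm μ X
    have a7 : rvH (fun i => μ ((Fintype.equivFin Ω).symm i))
        (fun i => (Y ((Fintype.equivFin Ω).symm i),
          ((Fintype.equivFin 𝒯) (T ((Fintype.equivFin Ω).symm i)), X ((Fintype.equivFin Ω).symm i))))
        = rvH μ (fun ω => (Y ω, (T ω, X ω))) := by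
      have r1 : rvH (fun i => μ ((Fintype.equivFin Ω).symm i))
          (fun i => ((Equiv.refl (Fin ℓ → Bool)).prodCongr
            ((Fintype.equivFin 𝒯).prodCongr (Equiv.refl (Fin ℓ → Bool)))
            ((fun i => (Y ((Fintype.equivFin Ω).symm i),
              (T ((Fintype.equivFin Ω).symm i), X ((Fintype.equivFin Ω).symm i)))) i)))
          = rvH (fun i => μ ((Fintype.equivFin Ω).symm i))
            (fun i => (Y ((Fintype.equivFin Ω).symm i),
              (T ((Fintype.equivFin Ω).symm i), X ((Fintype.equivFin Ω).symm i)))) :=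
        rvH_relabel _ _ _
      exact r1.trans (rvH_reindex (Fintype.equivFin Ω).symm μ (fun ω => (Y ω, (T ω, X ω))))
    have a8 : rvH (fun i => μ ((Fintype.equivFin Ω).symm i))
        (fun i => ((Fintype.equivFin 𝒯) (T ((Fintype.equivFin Ω).symm i)), X ((Fintype.equivFin Ω).symm i)))
        = rvH μ (fun ω => (T ω, X ω)) := by
      have r1 : rvH (fun i => μ ((Fintype.equivFin Ω).symm i))
          (fun i => ((Fintype.equivFin 𝒯).prodCongr (Equiv.refl (Fin ℓ → Bool))
            ((fun i => (T ((Fintype.equivFin Ω).symm i), X ((Fintype.equivFin Ω).symm i))) i)))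
          = rvH (fun i => μ ((Fintype.equivFin Ω).symm i))
            (fun i => (T ((Fintype.equivFin Ω).symm i), X ((Fintype.equivFin Ω).symm i))) :=
        rvH_relabel _ _ _
      exact r1.trans (rvH_reindex (Fintype.equivFin Ω).symm μ (fun ω => (T ω, X ω)))
    rw [← hI]
    simp only [cMI, condEnt]
    rw [a1, a2, a3, a4, a5, a6, a7, a8]
  obtain ⟨Ω', i1, 𝒯', i2, μ'', X'', Y'', T'', out'', h1, h2, h3, h4, h5⟩ :=
    construction f (fun i => μ ((Fintype.equivFin Ω).symm i)) hμ0 hs0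
      (fun i => X ((Fintype.equivFin Ω).symm i)) (fun i => Y ((Fintype.equivFin Ω).symm i))
      (fun i => (Fintype.equivFin 𝒯) (T ((Fintype.equivFin Ω).symm i)))
      (fun t => out ((Fintype.equivFin 𝒯).symm t)) δ I herr0 hI0 ε hε hε1
  exact ⟨Ω', i1, 𝒯', i2, μ'', X'', Y'', T'', out'', h1, h2,
    h3.trans (distOf_reindex (Fintype.equivFin Ω).symm μ (fun ω => (X ω, Y ω))), h4, h5⟩
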